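/- For the cost c(x,n) = −ln(max(0, ⟨x,n⟩)) on the sphere S^{d-1} (the Gauss curvature prescription cost), for every ε ∈ (0, π/2) the set D_ε = {(x,n) : d(x,n) ≤ π/2 − ε} (geodesic distance) is c-convex: if (x,y₀), (x,y₁) ∈ D_ε and y_t = c-exp_x((1−t)p₀ + t p₁) with p_i = −∇_x c(x,y_i), then (x, y_t) ∈ D_ε for all t ∈ [0,1]. -/

import Mathlib

open scoped RealInnerProductSpace

/-- The c-exponential map for the Gauss curvature prescription cost
`c(x,n) = -ln(max(0,⟨x,n⟩))` on the sphere. -/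
noncomputable def cexpGauss {d : ℕ} (x p : EuclideanSpace ℝ (Fin d)) :
    EuclideanSpace ℝ (Fin d) :=
  (Real.sqrt (1 + ‖p‖ ^ 2))⁻¹ • (p + x)

/-- For the Gauss curvature prescription cost on the sphere, the set
`D_ε = {(x,n) : d(x,n) ≤ π/2 - ε}` (geodesic distance `d(x,n) = arccos⟨x,n⟩`) is c-convex
with respect to the base point `x`. -/
theorem gauss_Deps_cconvex {d : ℕ} (ε : ℝ) (hε0 : 0 < ε) (hεπ : ε < Real.pi / 2)
    (x y₀ y₁ : EuclideanSpace ℝ (Fin d))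
    (hx : ‖x‖ = 1) (hy₀ : ‖y₀‖ = 1) (hy₁ : ‖y₁‖ = 1)
    (hd₀ : Real.arccos ⟪x, y₀⟫ ≤ Real.pi / 2 - ε)
    (hd₁ : Real.arccos ⟪x, y₁⟫ ≤ Real.pi / 2 - ε)
    (p₀ p₁ : EuclideanSpace ℝ (Fin d))
    -- `p_i = -∇_x c(x, y_i) = y_i/⟨x,y_i⟩ - x`
    (hp₀ : p₀ = ⟪x, y₀⟫⁻¹ • y₀ - x)
    (hp₁ : p₁ = ⟪x, y₁⟫⁻¹ • y₁ - x) :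
    ∀ t ∈ Set.Icc (0:ℝ) 1,
      Real.arccos ⟪x, cexpGauss x ((1 - t) • p₀ + t • p₁)⟫ ≤ Real.pi / 2 - ε := by
  intro t ht
  obtain ⟨ht0, ht1⟩ := ht
  have hπ := Real.pi_pos
  have hs : 0 < Real.sin ε := Real.sin_pos_of_pos_of_lt_pi hε0 (by linarith)
  have hcos : Real.cos (Real.pi / 2 - ε) = Real.sin ε := Real.cos_pi_div_two_sub ε
  -- inner products are at least sin ε
  have key : ∀ y : EuclideanSpace ℝ (Fin d), ‖y‖ = 1 →
      Real.arccos ⟪x, y⟫ ≤ Real.pi / 2 - ε → Real.sin ε ≤ ⟪x, y⟫ := by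
    intro y hy hd
    have hb : |⟪x, y⟫| ≤ 1 := by
      have := abs_real_inner_le_norm x y
      rw [hx, hy] at this; simpa using this
    obtain ⟨hb1, hb2⟩ := abs_le.1 hb
    have h1 : Real.cos (Real.arccos ⟪x, y⟫) = ⟪x, y⟫ := Real.cos_arccos hb1 hb2
    calc Real.sin ε = Real.cos (Real.pi / 2 - ε) := hcos.symm
      _ ≤ Real.cos (Real.arccos ⟪x, y⟫) :=
          Real.cos_le_cos_of_nonneg_of_le_pi (Real.arccos_nonneg _) (by linarith) hd
      _ = ⟪x, y⟫ := h1
  have hs₀ := key y₀ hy₀ hd₀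
  have hs₁ := key y₁ hy₁ hd₁
  have hc₀ : 0 < ⟪x, y₀⟫ := lt_of_lt_of_le hs hs₀
  have hc₁ : 0 < ⟪x, y₁⟫ := lt_of_lt_of_le hs hs₁
  have hxx : ⟪x, x⟫ = 1 := by
    rw [real_inner_self_eq_norm_sq, hx]; norm_num
  -- orthogonality of p₀, p₁ to x
  have horth : ∀ (y : EuclideanSpace ℝ (Fin d)), 0 < ⟪x, y⟫ →
      ⟪x, ⟪x, y⟫⁻¹ • y - x⟫ = 0 := by
    intro y hc
    rw [inner_sub_right, real_inner_smul_right, hxx, inv_mul_cancel₀ hc.ne', sub_self]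
  have ho₀ : ⟪x, p₀⟫ = 0 := by rw [hp₀]; exact horth y₀ hc₀
  have ho₁ : ⟪x, p₁⟫ = 0 := by rw [hp₁]; exact horth y₁ hc₁
  -- norms of p₀, p₁
  have hnorm : ∀ (y : EuclideanSpace ℝ (Fin d)), ‖y‖ = 1 → 0 < ⟪x, y⟫ →
      ‖(⟪x, y⟫⁻¹ • y - x : EuclideanSpace ℝ (Fin d))‖ ^ 2 = ⟪x, y⟫⁻¹ ^ 2 - 1 := by
    intro y hy hc
    rw [norm_sub_sq_real, real_inner_smul_left, norm_smul, hy, hx,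
      Real.norm_eq_abs, abs_of_pos (inv_pos.2 hc), real_inner_comm x y, inv_mul_cancel₀ hc.ne']
    ring
  have hn₀ : ‖p₀‖ ^ 2 = ⟪x, y₀⟫⁻¹ ^ 2 - 1 := by rw [hp₀]; exact hnorm y₀ hy₀ hc₀
  have hn₁ : ‖p₁‖ ^ 2 = ⟪x, y₁⟫⁻¹ ^ 2 - 1 := by rw [hp₁]; exact hnorm y₁ hy₁ hc₁
  set P : EuclideanSpace ℝ (Fin d) := (1 - t) • p₀ + t • p₁ with hP
  -- bound on ‖P‖²
  have hBi : ∀ (y : EuclideanSpace ℝ (Fin d)), Real.sin ε ≤ ⟪x, y⟫ → 0 < ⟪x, y⟫ →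
      ⟪x, y⟫⁻¹ ^ 2 - 1 ≤ (Real.sin ε)⁻¹ ^ 2 - 1 := by
    intro y h1 h2
    have : ⟪x, y⟫⁻¹ ≤ (Real.sin ε)⁻¹ := by
      apply inv_anti₀ hs h1
    have h3 : (0:ℝ) ≤ ⟪x, y⟫⁻¹ := le_of_lt (inv_pos.2 h2)
    nlinarith
  have hPle : ‖P‖ ≤ max ‖p₀‖ ‖p₁‖ := by
    calc ‖P‖ ≤ ‖(1 - t) • p₀‖ + ‖t • p₁‖ := norm_add_le _ _
      _ = (1 - t) * ‖p₀‖ + t * ‖p₁‖ := by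
          rw [norm_smul, norm_smul, Real.norm_eq_abs, Real.norm_eq_abs,
            abs_of_nonneg (by linarith), abs_of_nonneg ht0]
      _ ≤ (1 - t) * max ‖p₀‖ ‖p₁‖ + t * max ‖p₀‖ ‖p₁‖ := by
          gcongr
          · exact le_max_left _ _
          · exact le_max_right _ _
      _ = max ‖p₀‖ ‖p₁‖ := by ring
  have hPsq : ‖P‖ ^ 2 ≤ (Real.sin ε)⁻¹ ^ 2 - 1 := by
    have h1 : ‖P‖ ^ 2 ≤ (max ‖p₀‖ ‖p₁‖) ^ 2 :=
      pow_le_pow_left₀ (norm_nonneg P) hPle 2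
    have h2 : (max ‖p₀‖ ‖p₁‖) ^ 2 = max (‖p₀‖ ^ 2) (‖p₁‖ ^ 2) := by
      rcases le_total ‖p₀‖ ‖p₁‖ with h | h
      · rw [max_eq_right h, max_eq_right (pow_le_pow_left₀ (norm_nonneg p₀) h 2)]
      · rw [max_eq_left h, max_eq_left (pow_le_pow_left₀ (norm_nonneg p₁) h 2)]
    rw [h2] at h1
    refine le_trans h1 (max_le ?_ ?_)
    · rw [hn₀]; exact hBi y₀ hs₀ hc₀
    · rw [hn₁]; exact hBi y₁ hs₁ hc₁
  have h1P : (1:ℝ) ≤ 1 + ‖P‖ ^ 2 := le_add_of_nonneg_right (sq_nonneg _)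
  have hsqrt1 : (1:ℝ) ≤ Real.sqrt (1 + ‖P‖ ^ 2) := by
    have := Real.sqrt_le_sqrt h1P
    rwa [Real.sqrt_one] at this
  have hsqrtpos : 0 < Real.sqrt (1 + ‖P‖ ^ 2) := lt_of_lt_of_le one_pos hsqrt1
  have hsqrtle : Real.sqrt (1 + ‖P‖ ^ 2) ≤ (Real.sin ε)⁻¹ := by
    have h1 : (1:ℝ) + ‖P‖ ^ 2 ≤ ((Real.sin ε)⁻¹) ^ 2 := by linarith
    calc Real.sqrt (1 + ‖P‖ ^ 2) ≤ Real.sqrt (((Real.sin ε)⁻¹) ^ 2) := Real.sqrt_le_sqrt h1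
      _ = (Real.sin ε)⁻¹ := Real.sqrt_sq (le_of_lt (inv_pos.2 hs))
  -- compute the inner product
  have hinner : ⟪x, cexpGauss x P⟫ = (Real.sqrt (1 + ‖P‖ ^ 2))⁻¹ := by
    have hxP : ⟪x, P⟫ = 0 := by
      rw [hP, inner_add_right, real_inner_smul_right, real_inner_smul_right, ho₀, ho₁]
      ring
    rw [cexpGauss, real_inner_smul_right, inner_add_right, hxx, hxP]
    ring
  rw [hinner]
  have ha1 : Real.sin ε ≤ (Real.sqrt (1 + ‖P‖ ^ 2))⁻¹ := by
    have := inv_anti₀ hsqrtpos hsqrtle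
    rwa [inv_inv] at this
  have ha2 : (Real.sqrt (1 + ‖P‖ ^ 2))⁻¹ ≤ 1 := by
    rw [inv_le_one_iff₀]; right; exact hsqrt1
  have harcsin : Real.arcsin (Real.sin ε) ≤ Real.arcsin (Real.sqrt (1 + ‖P‖ ^ 2))⁻¹ :=
    Real.monotone_arcsin ha1
  calc Real.arccos (Real.sqrt (1 + ‖P‖ ^ 2))⁻¹
      ≤ Real.arccos (Real.sin ε) := by
        rw [Real.arccos_eq_pi_div_two_sub_arcsin, Real.arccos_eq_pi_div_two_sub_arcsin]
        linarith
    _ = Real.arccos (Real.cos (Real.pi / 2 - ε)) := by rw [hcos]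
    _ = Real.pi / 2 - ε := Real.arccos_cos (by linarith) (by linarith)
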